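/- arXiv:2110.04605 — 4 statements merged into one kernel-verified Lean document; each statement's English description precedes it below -/
import Mathlib

section
/- Let G be a symmetric positive definite 2×2 matrix, let ν ∈ ℝ² be a unit vector and τ = −ν^⊥. With γ(p) = √(G⁻¹p·p) and γ'' its Hessian, the identity γ''(ν) τ · τ = det(G⁻¹)/γ(ν)³ holds. -/
open Matrix

/-- Anticlockwise rotation by π/2. -/
def perp (p : Fin 2 → ℝ) : Fin 2 → ℝ := ![-(p 1), p 0]

noncomputable def qd (a b c : ℝ) (y : Fin 2 → ℝ) : (Fin 2 → ℝ) →L[ℝ] ℝ :=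
  (2*(a*y 0 + b*y 1)) • ContinuousLinearMap.proj 0 + (2*(b*y 0 + c*y 1)) • ContinuousLinearMap.proj 1

lemma qf_hasFDerivAt (a b c : ℝ) (y : Fin 2 → ℝ) :
    HasFDerivAt (fun p : Fin 2 → ℝ => (a*p 0 + b*p 1)*p 0 + (b*p 0 + c*p 1)*p 1) (qd a b c y) y := by
  have h0 : HasFDerivAt (fun p : Fin 2 → ℝ => p 0)
      (ContinuousLinearMap.proj 0 : (Fin 2 → ℝ) →L[ℝ] ℝ) y :=
    (ContinuousLinearMap.proj 0 : (Fin 2 → ℝ) →L[ℝ] ℝ).hasFDerivAt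
  have h1 : HasFDerivAt (fun p : Fin 2 → ℝ => p 1)
      (ContinuousLinearMap.proj 1 : (Fin 2 → ℝ) →L[ℝ] ℝ) y :=
    (ContinuousLinearMap.proj 1 : (Fin 2 → ℝ) →L[ℝ] ℝ).hasFDerivAt
  have H := (((h0.const_mul a).add (h1.const_mul b)).mul h0).add
    (((h0.const_mul b).add (h1.const_mul c)).mul h1)
  refine H.congr_fderiv ?_
  refine ContinuousLinearMap.ext fun v => ?_
  simp [qd]
  ring

lemma qf_contDiff (a b c : ℝ) :
    ContDiff ℝ ⊤ (fun p : Fin 2 → ℝ => (a*p 0 + b*p 1)*p 0 + (b*p 0 + c*p 1)*p 1) := by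
  fun_prop

lemma f_hasFDerivAt (a b c : ℝ) (y : Fin 2 → ℝ)
    (hy : 0 < (a*y 0 + b*y 1)*y 0 + (b*y 0 + c*y 1)*y 1) :
    HasFDerivAt (fun p : Fin 2 → ℝ => Real.sqrt ((a*p 0 + b*p 1)*p 0 + (b*p 0 + c*p 1)*p 1))
      ((1/(2*Real.sqrt ((a*y 0 + b*y 1)*y 0 + (b*y 0 + c*y 1)*y 1))) • qd a b c y) y :=
  (Real.hasDerivAt_sqrt hy.ne').comp_hasFDerivAt y (qf_hasFDerivAt a b c y)

lemma h_hasFDerivAt (a b c t0 t1 : ℝ) (ν : Fin 2 → ℝ)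
    (hq : 0 < (a*ν 0 + b*ν 1)*ν 0 + (b*ν 0 + c*ν 1)*ν 1) :
    HasFDerivAt (fun y : Fin 2 → ℝ =>
        ((a*y 0 + b*y 1)*t0 + (b*y 0 + c*y 1)*t1) *
          (Real.sqrt ((a*y 0 + b*y 1)*y 0 + (b*y 0 + c*y 1)*y 1))⁻¹)
      (((a*ν 0 + b*ν 1)*t0 + (b*ν 0 + c*ν 1)*t1) •
          ((-(1/(2*Real.sqrt ((a*ν 0 + b*ν 1)*ν 0 + (b*ν 0 + c*ν 1)*ν 1))) /
            (Real.sqrt ((a*ν 0 + b*ν 1)*ν 0 + (b*ν 0 + c*ν 1)*ν 1)) ^ 2) • qd a b c ν) +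
        (Real.sqrt ((a*ν 0 + b*ν 1)*ν 0 + (b*ν 0 + c*ν 1)*ν 1))⁻¹ •
          ((a*t0 + b*t1) • (ContinuousLinearMap.proj 0 : (Fin 2 → ℝ) →L[ℝ] ℝ)
            + (b*t0 + c*t1) • (ContinuousLinearMap.proj 1 : (Fin 2 → ℝ) →L[ℝ] ℝ))) ν := by
  have hs : Real.sqrt ((a*ν 0 + b*ν 1)*ν 0 + (b*ν 0 + c*ν 1)*ν 1) ≠ 0 :=
    (Real.sqrt_pos.2 hq).ne'
  have hinv : HasFDerivAt
      (fun y : Fin 2 → ℝ => (Real.sqrt ((a*y 0 + b*y 1)*y 0 + (b*y 0 + c*y 1)*y 1))⁻¹)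
      ((-(1/(2*Real.sqrt ((a*ν 0 + b*ν 1)*ν 0 + (b*ν 0 + c*ν 1)*ν 1))) /
        (Real.sqrt ((a*ν 0 + b*ν 1)*ν 0 + (b*ν 0 + c*ν 1)*ν 1)) ^ 2) • qd a b c ν) ν :=
    by have := (((Real.hasDerivAt_sqrt hq.ne').inv hs)).comp_hasFDerivAt ν (qf_hasFDerivAt a b c ν); exact this
  have h0 : HasFDerivAt (fun p : Fin 2 → ℝ => p 0)
      (ContinuousLinearMap.proj 0 : (Fin 2 → ℝ) →L[ℝ] ℝ) ν :=
    (ContinuousLinearMap.proj 0 : (Fin 2 → ℝ) →L[ℝ] ℝ).hasFDerivAt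
  have h1 : HasFDerivAt (fun p : Fin 2 → ℝ => p 1)
      (ContinuousLinearMap.proj 1 : (Fin 2 → ℝ) →L[ℝ] ℝ) ν :=
    (ContinuousLinearMap.proj 1 : (Fin 2 → ℝ) →L[ℝ] ℝ).hasFDerivAt
  have hP : HasFDerivAt (fun y : Fin 2 → ℝ => (a*y 0 + b*y 1)*t0 + (b*y 0 + c*y 1)*t1)
      ((a*t0 + b*t1) • (ContinuousLinearMap.proj 0 : (Fin 2 → ℝ) →L[ℝ] ℝ)
        + (b*t0 + c*t1) • (ContinuousLinearMap.proj 1 : (Fin 2 → ℝ) →L[ℝ] ℝ)) ν := by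
    have H := (((h0.const_mul a).add (h1.const_mul b)).mul_const t0).add
      (((h0.const_mul b).add (h1.const_mul c)).mul_const t1)
    refine H.congr_fderiv ?_
    refine ContinuousLinearMap.ext fun v => ?_
    simp
    ring
  exact hP.mul hinv

/-- For γ(p) = √(G⁻¹p·p) with G symmetric positive definite, a unit vector ν and
    τ = −ν^⊥, the Hessian satisfies γ''(ν) τ · τ = det(G⁻¹)/γ(ν)³. -/
theorem riemannian_hessian_tangent_identity
    (G : Matrix (Fin 2) (Fin 2) ℝ) (hG : G.PosDef)
    (ν τ : Fin 2 → ℝ) (hν : ν ⬝ᵥ ν = 1) (hτ : τ = -perp ν) :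
    fderiv ℝ (fderiv ℝ (fun p : Fin 2 → ℝ => Real.sqrt (G⁻¹.mulVec p ⬝ᵥ p))) ν τ τ =
      (G⁻¹).det / (Real.sqrt (G⁻¹.mulVec ν ⬝ᵥ ν)) ^ 3 := by
  have hApd : (G⁻¹).PosDef := hG.inv
  set a := G⁻¹ 0 0 with ha
  set b := G⁻¹ 0 1 with hb
  set c := G⁻¹ 1 1 with hc
  have hsym : G⁻¹ 1 0 = b := by
    have := hApd.isHermitian.apply 1 0
    simpa using this.symm
  have hQ : ∀ p : Fin 2 → ℝ, G⁻¹.mulVec p ⬝ᵥ p = (a*p 0 + b*p 1)*p 0 + (b*p 0 + c*p 1)*p 1 := by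
    intro p
    simp [Matrix.mulVec, dotProduct, Fin.sum_univ_two, hsym, ← ha, ← hb, ← hc, Matrix.vecHead, Matrix.vecTail]
  have hfun : (fun p : Fin 2 → ℝ => Real.sqrt (G⁻¹.mulVec p ⬝ᵥ p)) =
      fun p => Real.sqrt ((a*p 0 + b*p 1)*p 0 + (b*p 0 + c*p 1)*p 1) := by
    funext p; rw [hQ]
  have hν0 : ν ≠ 0 := by
    intro h; rw [h] at hν; simp at hν
  have hq : 0 < (a*ν 0 + b*ν 1)*ν 0 + (b*ν 0 + c*ν 1)*ν 1 := by
    rw [← hQ]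
    have := hApd.dotProduct_mulVec_pos hν0
    simpa [dotProduct_comm] using this
  have hs0 : Real.sqrt ((a*ν 0 + b*ν 1)*ν 0 + (b*ν 0 + c*ν 1)*ν 1) ≠ 0 :=
    (Real.sqrt_pos.2 hq).ne'
  have hs2 : Real.sqrt ((a*ν 0 + b*ν 1)*ν 0 + (b*ν 0 + c*ν 1)*ν 1) ^ 2 =
      (a*ν 0 + b*ν 1)*ν 0 + (b*ν 0 + c*ν 1)*ν 1 := Real.sq_sqrt hq.le
  rw [hfun, hQ]
  set f := fun p : Fin 2 → ℝ => Real.sqrt ((a*p 0 + b*p 1)*p 0 + (b*p 0 + c*p 1)*p 1) with hf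
  have hC2 : ContDiffAt ℝ 2 f ν :=
    (Real.contDiffAt_sqrt hq.ne').comp ν ((qf_contDiff a b c).contDiffAt.of_le le_top)
  have hdd : DifferentiableAt ℝ (fderiv ℝ f) ν :=
    (hC2.fderiv_right (m := 1) (by norm_num)).differentiableAt (by norm_num)
  have claim1 : fderiv ℝ (fderiv ℝ f) ν τ τ = fderiv ℝ (fun y => fderiv ℝ f y τ) ν τ := by
    rw [fderiv_clm_apply hdd (differentiableAt_const τ)]
    simp
  rw [claim1]
  have hopen : IsOpen {y : Fin 2 → ℝ | 0 < (a*y 0 + b*y 1)*y 0 + (b*y 0 + c*y 1)*y 1} :=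
    isOpen_lt continuous_const (by fun_prop)
  have hev : (fun y => fderiv ℝ f y τ) =ᶠ[nhds ν]
      (fun y => ((a*y 0 + b*y 1)*τ 0 + (b*y 0 + c*y 1)*τ 1) *
        (Real.sqrt ((a*y 0 + b*y 1)*y 0 + (b*y 0 + c*y 1)*y 1))⁻¹) := by
    filter_upwards [hopen.mem_nhds hq] with y hy
    rw [hf, (f_hasFDerivAt a b c y hy).fderiv]
    have hsy : Real.sqrt ((a*y 0 + b*y 1)*y 0 + (b*y 0 + c*y 1)*y 1) ≠ 0 :=
      (Real.sqrt_pos.2 hy).ne'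
    simp [qd]
    field_simp
  rw [hev.fderiv_eq, (h_hasFDerivAt a b c (τ 0) (τ 1) ν hq).fderiv]
  have hτ0 : τ 0 = ν 1 := by rw [hτ]; simp [perp]
  have hτ1 : τ 1 = -(ν 0) := by rw [hτ]; simp [perp]
  have hν' : ν 0 * ν 0 + ν 1 * ν 1 = 1 := by
    simpa [dotProduct, Fin.sum_univ_two] using hν
  have hdet : (G⁻¹).det = a*c - b*b := by
    rw [Matrix.det_fin_two, hsym]
  simp only [ContinuousLinearMap.add_apply, ContinuousLinearMap.smul_apply, qd,
    ContinuousLinearMap.proj_apply, smul_eq_mul, hτ0, hτ1, hdet]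
  set s := Real.sqrt ((a*ν 0 + b*ν 1)*ν 0 + (b*ν 0 + c*ν 1)*ν 1) with hs
  field_simp
  linear_combination ((a*ν 1 - b*ν 0)*ν 1 - (b*ν 1 - c*ν 0)*ν 0) * hs2 +
    ((a*c-b*b)*(ν 0*ν 0 + ν 1*ν 1 + 1)) * hν'
end

section
/- Let γ₀(p) = Σ_{ℓ=1}^L √(Λ_ℓ p · p) with each Λ_ℓ symmetric positive definite, let Φ₀(p) = (1/2)γ₀(p)², and for q ≠ 0 define B(q) = γ₀(q) Σ_ℓ Λ_ℓ/√(Λ_ℓ q·q). Then B(q) p · (p − q) ≥ Φ₀(p) − Φ₀(q) for all p ∈ ℝ² and q ≠ 0. -/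
open Matrix

lemma myPos {M : Matrix (Fin 2) (Fin 2) ℝ} (hM : M.PosDef) {x : Fin 2 → ℝ} (hx : x ≠ 0) :
    0 < M.mulVec x ⬝ᵥ x := by
  have := hM.dotProduct_mulVec_pos hx
  simpa [dotProduct_comm] using this

lemma myNonneg {M : Matrix (Fin 2) (Fin 2) ℝ} (hM : M.PosDef) (x : Fin 2 → ℝ) :
    0 ≤ M.mulVec x ⬝ᵥ x := by
  have := hM.posSemidef.dotProduct_mulVec_nonneg x
  simpa [dotProduct_comm] using this

lemma mySym {M : Matrix (Fin 2) (Fin 2) ℝ} (hM : M.PosDef) (p q : Fin 2 → ℝ) :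
    M.mulVec p ⬝ᵥ q = M.mulVec q ⬝ᵥ p := by
  have h : Mᵀ = M := by
    have := hM.isHermitian
    exact Matrix.isHermitian_iff_isSymm.mp this
  rw [← dotProduct_comm, dotProduct_mulVec, ← mulVec_transpose, h]

lemma myCS {M : Matrix (Fin 2) (Fin 2) ℝ} (hM : M.PosDef) (p : Fin 2 → ℝ) {q : Fin 2 → ℝ}
    (hq : q ≠ 0) :
    M.mulVec p ⬝ᵥ q ≤ Real.sqrt (M.mulVec p ⬝ᵥ p) * Real.sqrt (M.mulVec q ⬝ᵥ q) := by
  set A := M.mulVec p ⬝ᵥ p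
  set C := M.mulVec q ⬝ᵥ q
  set b := M.mulVec p ⬝ᵥ q
  have hC : 0 < C := myPos hM hq
  have hA : 0 ≤ A := myNonneg hM p
  have key : b ^ 2 ≤ A * C := by
    have h0 : 0 ≤ M.mulVec (C • p - b • q) ⬝ᵥ (C • p - b • q) := myNonneg hM _
    have hexp : M.mulVec (C • p - b • q) ⬝ᵥ (C • p - b • q) = C * (A * C - b ^ 2) := by
      simp only [mulVec_sub, mulVec_smul, sub_dotProduct, dotProduct_sub,
        smul_dotProduct, dotProduct_smul, smul_eq_mul]
      rw [mySym hM q p]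
      ring
    rw [hexp] at h0
    nlinarith [h0, hC]
  calc b ≤ |b| := le_abs_self b
    _ = Real.sqrt (b ^ 2) := by rw [Real.sqrt_sq_eq_abs]
    _ ≤ Real.sqrt (A * C) := Real.sqrt_le_sqrt key
    _ = Real.sqrt A * Real.sqrt C := Real.sqrt_mul hA C

/-- The key convexity inequality B(q) p · (p − q) ≥ Φ₀(p) − Φ₀(q) for
    γ₀(p) = Σ_ℓ √(Λ_ℓ p·p), Φ₀ = (1/2)γ₀², B(q) = γ₀(q) Σ_ℓ Λ_ℓ/√(Λ_ℓ q·q). -/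
theorem B_convexity_inequality
    (L : ℕ) (Λ : Fin L → Matrix (Fin 2) (Fin 2) ℝ)
    (hΛ : ∀ ℓ, (Λ ℓ).PosDef)
    (γ₀ : (Fin 2 → ℝ) → ℝ)
    (hγ₀ : γ₀ = fun p => ∑ ℓ, Real.sqrt ((Λ ℓ).mulVec p ⬝ᵥ p))
    (Φ₀ : (Fin 2 → ℝ) → ℝ)
    (hΦ₀ : Φ₀ = fun p => (1 / 2 : ℝ) * (γ₀ p) ^ 2)
    (B : (Fin 2 → ℝ) → Matrix (Fin 2) (Fin 2) ℝ)
    (hB : ∀ q : Fin 2 → ℝ, q ≠ 0 →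
      B q = γ₀ q • ∑ ℓ, (Real.sqrt ((Λ ℓ).mulVec q ⬝ᵥ q))⁻¹ • Λ ℓ) :
    ∀ (p q : Fin 2 → ℝ), q ≠ 0 →
      (B q).mulVec p ⬝ᵥ (p - q) ≥ Φ₀ p - Φ₀ q := by
  intro p q hq
  rw [hB q hq]
  set a : Fin L → ℝ := fun ℓ => Real.sqrt ((Λ ℓ).mulVec p ⬝ᵥ p) with ha
  set b : Fin L → ℝ := fun ℓ => Real.sqrt ((Λ ℓ).mulVec q ⬝ᵥ q) with hb
  have hbpos : ∀ ℓ, 0 < b ℓ := fun ℓ => Real.sqrt_pos.mpr (myPos (hΛ ℓ) hq)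
  have hann : ∀ ℓ, 0 ≤ a ℓ := fun ℓ => Real.sqrt_nonneg _
  have ha2 : ∀ ℓ, (a ℓ) ^ 2 = (Λ ℓ).mulVec p ⬝ᵥ p := fun ℓ =>
    Real.sq_sqrt (myNonneg (hΛ ℓ) p)
  -- rewrite the LHS as γ₀ q * ∑ ℓ, (b ℓ)⁻¹ * (Λ ℓ p ⬝ᵥ (p - q))
  have hsummv : (∑ ℓ, (b ℓ)⁻¹ • Λ ℓ) *ᵥ p = ∑ ℓ, ((b ℓ)⁻¹ • Λ ℓ) *ᵥ p :=
    map_sum (AddMonoidHom.mk' (fun M : Matrix (Fin 2) (Fin 2) ℝ => M *ᵥ p)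
      (fun A B => Matrix.add_mulVec A B p)) _ _
  have hsumdp : (∑ ℓ, ((b ℓ)⁻¹ • Λ ℓ) *ᵥ p) ⬝ᵥ (p - q)
      = ∑ ℓ, (((b ℓ)⁻¹ • Λ ℓ) *ᵥ p) ⬝ᵥ (p - q) :=
    map_sum (AddMonoidHom.mk' (fun v : Fin 2 → ℝ => v ⬝ᵥ (p - q))
      (fun u v => add_dotProduct u v (p - q))) _ _
  have hlhs : (γ₀ q • ∑ ℓ, (b ℓ)⁻¹ • Λ ℓ) *ᵥ p ⬝ᵥ (p - q)
      = γ₀ q * ∑ ℓ, (b ℓ)⁻¹ * ((Λ ℓ).mulVec p ⬝ᵥ (p - q)) := by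
    rw [smul_mulVec, smul_dotProduct, smul_eq_mul, hsummv, hsumdp]
    congr 1
    refine Finset.sum_congr rfl fun ℓ _ => ?_
    rw [smul_mulVec, smul_dotProduct, smul_eq_mul]
  rw [hlhs]
  -- per-term inequality : (b ℓ)⁻¹ * a ℓ ^ 2 - a ℓ ≤ (b ℓ)⁻¹ * (Λ ℓ p ⬝ᵥ (p - q))
  have hterm : ∀ ℓ : Fin L,
      (b ℓ)⁻¹ * (a ℓ) ^ 2 - a ℓ ≤ (b ℓ)⁻¹ * ((Λ ℓ).mulVec p ⬝ᵥ (p - q)) := by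
    intro ℓ
    have hcs : (Λ ℓ).mulVec p ⬝ᵥ q ≤ a ℓ * b ℓ := myCS (hΛ ℓ) p hq
    have hdot : (Λ ℓ).mulVec p ⬝ᵥ (p - q)
        = ((Λ ℓ).mulVec p ⬝ᵥ p) - ((Λ ℓ).mulVec p ⬝ᵥ q) := dotProduct_sub _ p q
    rw [hdot, ← ha2 ℓ, mul_sub]
    have h1 : (b ℓ)⁻¹ * ((Λ ℓ).mulVec p ⬝ᵥ q) ≤ a ℓ := by
      rw [inv_mul_eq_div, div_le_iff₀ (hbpos ℓ)]
      exact hcs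
    linarith
  have hsum : (∑ ℓ, (b ℓ)⁻¹ * (a ℓ) ^ 2) - γ₀ p
      ≤ ∑ ℓ, (b ℓ)⁻¹ * ((Λ ℓ).mulVec p ⬝ᵥ (p - q)) := by
    rw [hγ₀]
    simp only [← ha]
    rw [← Finset.sum_sub_distrib]
    exact Finset.sum_le_sum fun ℓ _ => hterm ℓ
  -- Cauchy–Schwarz on the sum: (γ₀ p)² ≤ (∑ b⁻¹ a²) * γ₀ q
  have hCS : (γ₀ p) ^ 2 ≤ (∑ ℓ, (b ℓ)⁻¹ * (a ℓ) ^ 2) * γ₀ q := by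
    rw [hγ₀]
    simp only [← ha, ← hb]
    exact Finset.sum_sq_le_sum_mul_sum_of_sq_eq_mul Finset.univ
      (fun ℓ _ => mul_nonneg (inv_nonneg.mpr (hbpos ℓ).le) (sq_nonneg _))
      (fun ℓ _ => (hbpos ℓ).le)
      (fun ℓ _ => by
        show a ℓ ^ 2 = (b ℓ)⁻¹ * a ℓ ^ 2 * b ℓ
        rw [mul_comm ((b ℓ)⁻¹), mul_assoc, inv_mul_cancel₀ (hbpos ℓ).ne', mul_one])
  have hGnn : 0 ≤ γ₀ q := by
    rw [hγ₀]
    exact Finset.sum_nonneg fun ℓ _ => Real.sqrt_nonneg _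
  rw [hΦ₀, ge_iff_le]
  simp only
  nlinarith [sq_nonneg (γ₀ p - γ₀ q), mul_le_mul_of_nonneg_left hsum hGnn, hCS]
end

section
/- For the anisotropy γ₀(p) = |p|(1 + δ cos(kθ(p))) in polar form p = |p|(cos θ, sin θ) with k ∈ ℕ, k ≥ 2, and 0 ≤ δ, the strict convexity condition γ₀''(p)q·q > 0 for all orthonormal p, q holds if and only if δ < 1/(k² − 1). -/
open Matrix

open Matrix Complex ContinuousLinearMap

noncomputable def JJ : ℂ →L[ℝ] (ℂ →L[ℝ] ℝ) :=
  (ContinuousLinearMap.compL ℝ ℂ ℂ ℝ Complex.reCLM).comp (ContinuousLinearMap.mul ℝ ℂ)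

@[simp] lemma JJ_apply (c w : ℂ) : JJ c w = (c * w).re := rfl

lemma hasFDerivAt_normSq (z : ℂ) :
    HasFDerivAt Complex.normSq ((2:ℝ) • JJ ((starRingEnd ℂ) z)) z := by
  have h := (Complex.reCLM.hasFDerivAt (x := z)).mul (Complex.reCLM.hasFDerivAt (x := z))
  have h2 := (Complex.imCLM.hasFDerivAt (x := z)).mul (Complex.imCLM.hasFDerivAt (x := z))
  have h3 := h.add h2
  rw [show (⇑Complex.reCLM * ⇑Complex.reCLM + ⇑Complex.imCLM * ⇑Complex.imCLM)
      = ⇑Complex.normSq from funext fun w => by simp [Complex.normSq_apply]] at h3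
  refine h3.congr_fderiv ?_
  ext w
  simp [Complex.mul_re]
  ring

lemma sqrt_normSq_ne_zero {z : ℂ} (hz : z ≠ 0) : Real.sqrt (Complex.normSq z) ≠ 0 := by
  rw [Real.sqrt_ne_zero']
  exact Complex.normSq_pos.2 hz

lemma hasFDerivAt_r {z : ℂ} (hz : z ≠ 0) :
    HasFDerivAt (fun z : ℂ => Real.sqrt (Complex.normSq z))
      ((Real.sqrt (Complex.normSq z))⁻¹ • JJ ((starRingEnd ℂ) z)) z := by
  have hB : Complex.normSq z ≠ 0 := by simpa [Complex.normSq_eq_zero] using hz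
  have h : HasFDerivAt (fun z : ℂ => Real.sqrt (Complex.normSq z))
      ((1 / (2 * Real.sqrt (Complex.normSq z))) • (2:ℝ) • JJ ((starRingEnd ℂ) z)) z :=
    (Real.hasDerivAt_sqrt hB).comp_hasFDerivAt z (hasFDerivAt_normSq z)
  convert h using 1
  ext w
  have hs := sqrt_normSq_ne_zero hz
  simp [smul_smul]

lemma hasFDerivAt_rm {z : ℂ} (hz : z ≠ 0) (m : ℤ) :
    HasFDerivAt (fun z : ℂ => Real.sqrt (Complex.normSq z) ^ m)
      (((m : ℝ) * Real.sqrt (Complex.normSq z) ^ (m - 2)) • JJ ((starRingEnd ℂ) z)) z := by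
  have hs := sqrt_normSq_ne_zero hz
  have h : HasFDerivAt (fun z : ℂ => Real.sqrt (Complex.normSq z) ^ m)
      (((m : ℝ) * Real.sqrt (Complex.normSq z) ^ (m - 1)) • (Real.sqrt (Complex.normSq z))⁻¹ • JJ ((starRingEnd ℂ) z)) z :=
    by exact (hasDerivAt_zpow m _ (Or.inl hs)).comp_hasFDerivAt z (hasFDerivAt_r hz)
  convert h using 1
  ext w
  simp only [ContinuousLinearMap.smul_apply, smul_eq_mul, JJ_apply]
  rw [show m - 2 = m - 1 - 1 by ring, zpow_sub_one₀ hs]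
  ring

lemma hasFDerivAt_A (k : ℕ) (z : ℂ) :
    HasFDerivAt (fun z : ℂ => (z ^ k).re) ((k : ℝ) • JJ (z ^ (k - 1))) z := by
  have h := Complex.reCLM.hasFDerivAt.comp z
    (((hasDerivAt_pow k z).hasFDerivAt).restrictScalars ℝ)
  refine h.congr_fderiv ?_
  ext w
  simp [Complex.mul_re, Complex.mul_im]
  ring

noncomputable def gg (δ : ℝ) (k : ℕ) (z : ℂ) : ℝ :=
  Real.sqrt (Complex.normSq z) +
    δ * ((z ^ k).re * Real.sqrt (Complex.normSq z) ^ ((1 : ℤ) - k))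

noncomputable def GG (δ : ℝ) (k : ℕ) (z : ℂ) : ℂ →L[ℝ] ℝ :=
  (Real.sqrt (Complex.normSq z) ^ (-1 : ℤ)
      + δ * ((1 : ℝ) - k) * ((z ^ k).re * Real.sqrt (Complex.normSq z) ^ ((1 : ℤ) - k - 2)))
    • JJ ((starRingEnd ℂ) z)
  + (δ * k * Real.sqrt (Complex.normSq z) ^ ((1 : ℤ) - k)) • JJ (z ^ (k - 1))

lemma hasFDerivAt_gg (δ : ℝ) (k : ℕ) {z : ℂ} (hz : z ≠ 0) :
    HasFDerivAt (gg δ k) (GG δ k z) z := by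
  have hs := sqrt_normSq_ne_zero hz
  have h := (hasFDerivAt_r hz).add
    (((hasFDerivAt_A k z).mul (hasFDerivAt_rm hz ((1 : ℤ) - k))).const_mul δ)
  have hfun : (fun z : ℂ => Real.sqrt (Complex.normSq z)
      + δ * ((z ^ k).re * Real.sqrt (Complex.normSq z) ^ ((1 : ℤ) - k))) = gg δ k := rfl
  replace h : HasFDerivAt (gg δ k) _ z := h
  refine h.congr_fderiv ?_
  ext w
  simp only [GG, ContinuousLinearMap.add_apply, ContinuousLinearMap.smul_apply, smul_eq_mul,
    JJ_apply, _root_.zpow_neg_one]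
  push_cast
  ring

lemma qq_eq {p q : ℂ} (hp : Complex.normSq p = 1) (hq : Complex.normSq q = 1)
    (hpq : ((starRingEnd ℂ) p * q).re = 0) : q * q = -(p * p) := by
  set u := (starRingEnd ℂ) p * q with hu
  have hpu : p * u = q := by
    rw [hu, ← mul_assoc, Complex.mul_conj, hp]
    simp
  have hnu : Complex.normSq u = 1 := by
    rw [hu, Complex.normSq_mul, Complex.normSq_conj, hp, hq]; ring
  have huim : u.im * u.im = 1 := by
    have := Complex.normSq_apply u
    rw [hnu, hpq] at this
    nlinarith [this]
  have huu : u * u = -1 := by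
    apply Complex.ext <;> simp [Complex.mul_re, Complex.mul_im, hpq, huim]
  calc q * q = (p * u) * (p * u) := by rw [hpu]
    _ = (p * p) * (u * u) := by ring
    _ = -(p * p) := by rw [huu]; ring

lemma key_complex (k : ℕ) (hk : 2 ≤ k) (δ : ℝ) {p q : ℂ}
    (hp : Complex.normSq p = 1) (hq : Complex.normSq q = 1)
    (hpq : ((starRingEnd ℂ) p * q).re = 0) :
    fderiv ℝ (fderiv ℝ (gg δ k)) p q q = 1 - δ * ((k : ℝ) ^ 2 - 1) * (p ^ k).re := by
  have hp0 : p ≠ 0 := by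
    intro h; rw [h] at hp; simp at hp
  -- eventual equality of fderiv gg with GG near p
  have hev : fderiv ℝ (gg δ k) =ᶠ[nhds p] GG δ k := by
    filter_upwards [IsOpen.mem_nhds isOpen_compl_singleton hp0] with z hz
    exact (hasFDerivAt_gg δ k hz).fderiv
  -- second derivative of gg at p
  have hJ1 : HasFDerivAt (fun z : ℂ => JJ ((starRingEnd ℂ) z))
      (JJ.comp Complex.conjCLE.toContinuousLinearMap) p :=
    (JJ.comp Complex.conjCLE.toContinuousLinearMap).hasFDerivAt
  have hJ2 : HasFDerivAt (fun z : ℂ => JJ (z ^ (k - 1)))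
      (JJ.comp ((ContinuousLinearMap.smulRight (1 : ℂ →L[ℂ] ℂ)
        (((k - 1 : ℕ) : ℂ) * p ^ (k - 1 - 1))).restrictScalars ℝ)) p :=
    JJ.hasFDerivAt.comp p ((hasDerivAt_pow (k - 1) p).hasFDerivAt.restrictScalars ℝ)
  have hc₁ := (hasFDerivAt_rm hp0 (-1)).add
    (((hasFDerivAt_A k p).mul (hasFDerivAt_rm hp0 ((1 : ℤ) - k - 2))).const_mul
      (δ * ((1 : ℝ) - k)))
  have hc₂ := (hasFDerivAt_rm hp0 ((1 : ℤ) - k)).const_mul (δ * k)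
  have hG := (hc₁.smul hJ1).add (hc₂.smul hJ2)
  have hGG : HasFDerivAt (GG δ k) _ p := hG
  rw [hev.fderiv_eq, hGG.fderiv]
  simp only [ContinuousLinearMap.add_apply, ContinuousLinearMap.smul_apply,
    ContinuousLinearMap.smulRight_apply, ContinuousLinearMap.coe_comp', Function.comp_apply,
    ContinuousLinearMap.coe_restrictScalars', ContinuousLinearMap.one_apply, smul_eq_mul,
    JJ_apply, ContinuousLinearEquiv.coe_coe, Pi.add_apply, Pi.mul_apply, hp, Real.sqrt_one, _root_.one_zpow, mul_one, one_mul]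
  have hk1 : (1:ℕ) ≤ k := le_trans one_le_two hk
  have hqq := qq_eq hp hq hpq
  have hre1 : ((starRingEnd ℂ) q * q).re = 1 := by
    rw [mul_comm, Complex.mul_conj, hq]; simp
  have hpk : q * (((k - 1 : ℕ) : ℂ) * p ^ (k - 1 - 1)) * q
      = -(((k - 1 : ℕ) : ℂ) * p ^ k) := by
    have h2 : p ^ (k - 1 - 1) * (q * q) = -(p ^ k) := by
      rw [hqq, show k - 1 - 1 = k - 2 from rfl]
      have : p ^ (k - 2) * (p * p) = p ^ k := by
        rw [show p * p = p ^ 2 by ring, ← pow_add, Nat.sub_add_cancel hk]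
      rw [mul_neg, this]
    calc q * (((k - 1 : ℕ) : ℂ) * p ^ (k - 1 - 1)) * q
        = ((k - 1 : ℕ) : ℂ) * (p ^ (k - 1 - 1) * (q * q)) := by ring
      _ = -(((k - 1 : ℕ) : ℂ) * p ^ k) := by rw [h2]; ring
  rw [Complex.conjCLE_apply, hre1, hpq, hpk]
  simp only [Complex.neg_re, Complex.mul_re, Complex.natCast_re, Complex.natCast_im]
  push_cast [Nat.cast_sub hk1]
  ring

noncomputable def ee : (Fin 2 → ℝ) ≃L[ℝ] ℂ :=
  (ContinuousLinearEquiv.finTwoArrow ℝ ℝ).trans Complex.equivRealProdCLM.symm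

@[simp] lemma ee_apply (p : Fin 2 → ℝ) : ee p = ⟨p 0, p 1⟩ := by
  simp [ee, Complex.equivRealProdCLM_symm_apply]
  apply Complex.ext <;> simp

lemma transfer (f : ℂ → ℝ) (x u : Fin 2 → ℝ) :
    fderiv ℝ (fderiv ℝ (f ∘ ee)) x u u = fderiv ℝ (fderiv ℝ f) (ee x) (ee u) (ee u) := by
  have h1 : fderiv ℝ (f ∘ ee) = fun y => ((fderiv ℝ f (ee y)).comp (ee : (Fin 2 → ℝ) →L[ℝ] ℂ)) :=
    funext fun y => ee.comp_right_fderiv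
  set Φ : (ℂ →L[ℝ] ℝ) ≃L[ℝ] ((Fin 2 → ℝ) →L[ℝ] ℝ) :=
    ee.symm.arrowCongr (ContinuousLinearEquiv.refl ℝ ℝ) with hΦ
  have hΦap : ∀ L : ℂ →L[ℝ] ℝ, Φ L = L.comp (ee : (Fin 2 → ℝ) →L[ℝ] ℂ) := by
    intro L; ext w; simp [hΦ, ContinuousLinearEquiv.arrowCongr]
  have h2 : fderiv ℝ (f ∘ ee) = Φ ∘ ((fderiv ℝ f) ∘ ee) := by
    rw [h1]; funext y; simp [Function.comp, hΦap]
  rw [h1]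
  calc fderiv ℝ (fun y => (fderiv ℝ f (ee y)).comp (ee : (Fin 2 → ℝ) →L[ℝ] ℂ)) x u u
      = fderiv ℝ (Φ ∘ ((fderiv ℝ f) ∘ ee)) x u u := by rw [← h2, h1]
    _ = (Φ.toContinuousLinearMap.comp (fderiv ℝ ((fderiv ℝ f) ∘ ee) x)) u u := by
        rw [Φ.comp_fderiv]
    _ = Φ (fderiv ℝ ((fderiv ℝ f) ∘ ee) x u) u := rfl
    _ = Φ ((fderiv ℝ (fderiv ℝ f) (ee x)).comp (ee : (Fin 2 → ℝ) →L[ℝ] ℂ) u) u := by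
        rw [ee.comp_right_fderiv]
    _ = fderiv ℝ (fderiv ℝ f) (ee x) (ee u) (ee u) := by rw [hΦap]; rfl

lemma polar (δ : ℝ) (k : ℕ) (hk : 1 ≤ k) (z : ℂ) :
    Real.sqrt (Complex.normSq z) * (1 + δ * Real.cos (k * z.arg)) = gg δ k z := by
  rcases eq_or_ne z 0 with rfl | hz
  · simp [gg, zero_pow (by omega : k ≠ 0)]
  · have habs : Real.sqrt (Complex.normSq z) = ‖z‖ := (Complex.norm_def z).symm
    have hA : ‖z‖ ≠ 0 := norm_ne_zero_iff.mpr hz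
    have hre : (z ^ k).re = ‖z‖ ^ k * Real.cos (k * z.arg) := by
      conv_lhs => rw [← Complex.norm_mul_exp_arg_mul_I z]
      rw [mul_pow, ← Complex.exp_nat_mul]
      rw [show ((k : ℂ) * (↑z.arg * Complex.I)) = ↑((k : ℝ) * z.arg) * Complex.I by
        push_cast; ring]
      rw [show (((‖z‖ : ℝ) : ℂ)) ^ k = (((‖z‖ ^ k : ℝ)) : ℂ) by push_cast; ring]
      rw [Complex.re_ofReal_mul, Complex.exp_ofReal_mul_I_re]
    have hzp : ‖z‖ ^ k * ‖z‖ ^ ((1 : ℤ) - k) = ‖z‖ := by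
      rw [← zpow_natCast ‖z‖ k, ← zpow_add₀ hA]
      simp
    rw [gg, habs, hre]
    calc ‖z‖ * (1 + δ * Real.cos (k * z.arg))
        = ‖z‖ + δ * (Real.cos (k * z.arg) *
            (‖z‖ ^ k * ‖z‖ ^ ((1 : ℤ) - k))) := by rw [hzp]; ring
      _ = _ := by ring

lemma dot_eq (p q : Fin 2 → ℝ) :
    p ⬝ᵥ q = ((starRingEnd ℂ) (ee p) * ee q).re := by
  simp [dotProduct, Fin.sum_univ_two, Complex.mul_re]

lemma normSq_ee (p : Fin 2 → ℝ) : Complex.normSq (ee p) = p ⬝ᵥ p := by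
  rw [dot_eq]
  rw [mul_comm, Complex.mul_conj]
  simp


/-- For the k-fold anisotropy γ₀(p) = |p|(1 + δ cos(kθ(p))), k ≥ 2, δ ≥ 0,
    strict convexity γ₀''(p)q·q > 0 for all orthonormal p, q holds iff
    δ < 1/(k² − 1). -/
theorem kfold_anisotropy_strictly_convex_iff
    (k : ℕ) (hk : 2 ≤ k) (δ : ℝ) (hδ : 0 ≤ δ)
    (γ₀ : (Fin 2 → ℝ) → ℝ)
    (hγ₀ : γ₀ = fun p => Real.sqrt (p ⬝ᵥ p) *
      (1 + δ * Real.cos ((k : ℝ) * Complex.arg ⟨p 0, p 1⟩))) :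
    (∀ p q : Fin 2 → ℝ, p ⬝ᵥ p = 1 → q ⬝ᵥ q = 1 → p ⬝ᵥ q = 0 →
      0 < fderiv ℝ (fderiv ℝ γ₀) p q q) ↔ δ < 1 / ((k : ℝ) ^ 2 - 1) := by
  have hk1 : (1:ℕ) ≤ k := le_trans one_le_two hk
  have hkR : (2:ℝ) ≤ (k:ℝ) := by exact_mod_cast hk
  have hpos : (0:ℝ) < (k:ℝ) ^ 2 - 1 := by nlinarith
  have hfun : γ₀ = gg δ k ∘ ee := by
    rw [hγ₀]; funext p
    have := polar δ k hk1 (ee p)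
    rw [normSq_ee] at this
    rw [show (gg δ k ∘ ⇑ee) p = gg δ k (ee p) from rfl, ← this, ee_apply]
  subst hfun
  constructor
  · intro h
    have h1 := h ![1, 0] ![0, 1] (by simp [dotProduct, Fin.sum_univ_two])
      (by simp [dotProduct, Fin.sum_univ_two])
      (by simp [dotProduct, Fin.sum_univ_two])
    rw [transfer] at h1
    have he1 : ee ![1, 0] = 1 := by
      rw [ee_apply]; apply Complex.ext <;> simp
    have he2 : ee ![0, 1] = Complex.I := by
      rw [ee_apply]; apply Complex.ext <;> simp
    rw [he1, he2, key_complex k hk δ (by simp) (by simp)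
      (by simp)] at h1
    simp at h1
    rw [lt_div_iff₀ hpos]
    linarith
  · intro hlt p q hp hq hpq
    rw [transfer, key_complex k hk δ (by rwa [normSq_ee]) (by rwa [normSq_ee])
      (by rw [← dot_eq]; exact hpq)]
    have habs : ‖ee p‖ = 1 := by
      have h2 : ‖ee p‖ ^ 2 = 1 := by rw [Complex.sq_norm, normSq_ee, hp]
      nlinarith [norm_nonneg (ee p)]
    have hre : |((ee p) ^ k).re| ≤ 1 := by
      calc |((ee p) ^ k).re| ≤ ‖(ee p) ^ k‖ := Complex.abs_re_le_norm _
        _ = 1 := by rw [norm_pow, habs, one_pow]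
    have hc : δ * ((k:ℝ) ^ 2 - 1) < 1 := by rwa [lt_div_iff₀ hpos] at hlt
    have hc0 : 0 ≤ δ * ((k:ℝ) ^ 2 - 1) := mul_nonneg hδ (le_of_lt hpos)
    have := abs_le.1 hre
    nlinarith [mul_le_mul_of_nonneg_left this.2 hc0]
end

section
/- Let δ ∈ (0,1] and γ₀(p) = √(p₁² + δ²p₂²). Then for t ∈ [0, 1/2), the parameterization x(ρ,t) = √(1−2t)(cos 2πρ, δ sin 2πρ) of shrinking ellipses satisfies the anisotropic curve shortening law (1/γ₀(ν)) x_t · ν = κ γ₀''(ν)τ·τ, where τ = x_ρ/|x_ρ|, ν = τ^⊥, κ = x_{ρρ}·ν/|x_ρ|². -/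
open Matrix Real

noncomputable def qf (δ : ℝ) (p : Fin 2 → ℝ) : ℝ := p 0 ^ 2 + δ ^ 2 * p 1 ^ 2

lemma qf_hasFDerivAt_s18 (δ : ℝ) (p : Fin 2 → ℝ) :
    HasFDerivAt (qf δ) ((2 * p 0) • (ContinuousLinearMap.proj 0 : (Fin 2 → ℝ) →L[ℝ] ℝ)
      + (2 * (δ^2 * p 1)) • (ContinuousLinearMap.proj 1 : (Fin 2 → ℝ) →L[ℝ] ℝ)) p := by
  have h0 : HasFDerivAt (fun p : Fin 2 → ℝ => p 0)
      (ContinuousLinearMap.proj 0 : (Fin 2 → ℝ) →L[ℝ] ℝ) p :=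
    (ContinuousLinearMap.proj 0 : (Fin 2 → ℝ) →L[ℝ] ℝ).hasFDerivAt
  have h1 : HasFDerivAt (fun p : Fin 2 → ℝ => p 1)
      (ContinuousLinearMap.proj 1 : (Fin 2 → ℝ) →L[ℝ] ℝ) p :=
    (ContinuousLinearMap.proj 1 : (Fin 2 → ℝ) →L[ℝ] ℝ).hasFDerivAt
  have h2 : qf δ = fun p : Fin 2 → ℝ => p 0 * p 0 + δ^2 * (p 1 * p 1) := by
    funext p; unfold qf; ring
  rw [h2]
  have := (h0.mul h0).add ((h1.mul h1).const_mul (δ^2))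
  refine this.congr_fderiv ?_
  ext v
  simp [ContinuousLinearMap.proj]
  ring

lemma qf_contDiff_s18 (δ : ℝ) : ContDiff ℝ ⊤ (qf δ) := by
  unfold qf
  fun_prop

lemma gamma_fderiv_apply (δ : ℝ) (p w : Fin 2 → ℝ) (hp : qf δ p ≠ 0) :
    fderiv ℝ (fun p => Real.sqrt (qf δ p)) p w
      = (p 0 * w 0 + δ^2 * p 1 * w 1) / Real.sqrt (qf δ p) := by
  have hq := qf_hasFDerivAt_s18 δ p
  have hs := (Real.hasDerivAt_sqrt hp).comp_hasFDerivAt p hq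
  have heq : (fun p => Real.sqrt (qf δ p)) = (fun x => Real.sqrt x) ∘ qf δ := rfl
  rw [heq, hs.fderiv]
  have hqnn : 0 ≤ qf δ p := by unfold qf; positivity
  have hspos : 0 < Real.sqrt (qf δ p) := Real.sqrt_pos.2 (lt_of_le_of_ne hqnn (Ne.symm hp))
  simp [ContinuousLinearMap.proj]
  field_simp

lemma sqrt_qf_hasFDerivAt (δ : ℝ) (p : Fin 2 → ℝ) (hp : qf δ p ≠ 0) :
    HasFDerivAt (fun p => Real.sqrt (qf δ p))
      ((1 / (2 * Real.sqrt (qf δ p))) •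
        ((2 * p 0) • (ContinuousLinearMap.proj 0 : (Fin 2 → ℝ) →L[ℝ] ℝ)
          + (2 * (δ^2 * p 1)) • (ContinuousLinearMap.proj 1 : (Fin 2 → ℝ) →L[ℝ] ℝ))) p :=
  (Real.hasDerivAt_sqrt hp).comp_hasFDerivAt p (qf_hasFDerivAt_s18 δ p)

lemma gamma_hess (δ : ℝ) (v w : Fin 2 → ℝ) (hv : qf δ v ≠ 0) :
    fderiv ℝ (fderiv ℝ (fun p => Real.sqrt (qf δ p))) v w w
      = (w 0^2 + δ^2 * w 1^2) / Real.sqrt (qf δ v)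
        - (v 0 * w 0 + δ^2 * v 1 * w 1)^2 / (qf δ v * Real.sqrt (qf δ v)) := by
  set γ : (Fin 2 → ℝ) → ℝ := fun p => Real.sqrt (qf δ p) with hγ
  have hqnn : 0 ≤ qf δ v := by unfold qf; positivity
  have hqpos : 0 < qf δ v := lt_of_le_of_ne hqnn (Ne.symm hv)
  have hspos : 0 < Real.sqrt (qf δ v) := Real.sqrt_pos.2 hqpos
  have hcd : ContDiffAt ℝ 2 γ v := by
    have : ContDiffAt ℝ 2 (fun x : ℝ => Real.sqrt x) (qf δ v) := Real.contDiffAt_sqrt hv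
    exact this.comp v ((qf_contDiff_s18 δ).contDiffAt.of_le le_top)
  have hdiff : DifferentiableAt ℝ (fderiv ℝ γ) v := by
    have h1 : ContDiffAt ℝ 1 (fderiv ℝ γ) v := hcd.fderiv_right (by norm_num)
    exact h1.differentiableAt one_ne_zero
  have step1 : fderiv ℝ (fun p => fderiv ℝ γ p w) v w = fderiv ℝ (fderiv ℝ γ) v w w := by
    rw [fderiv_clm_apply hdiff (differentiableAt_const w)]
    simp
  have hU : {p : Fin 2 → ℝ | qf δ p ≠ 0} ∈ nhds v := by
    have : IsOpen {p : Fin 2 → ℝ | qf δ p ≠ 0} :=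
      isOpen_ne.preimage (by unfold qf; fun_prop)
    exact this.mem_nhds hv
  have heq : (fun p => fderiv ℝ γ p w)
      =ᶠ[nhds v] fun p => (p 0 * w 0 + δ^2 * p 1 * w 1) / Real.sqrt (qf δ p) :=
    Filter.eventuallyEq_of_mem hU fun p hp => gamma_fderiv_apply δ p w hp
  rw [← step1, heq.fderiv_eq]
  have h0 : HasFDerivAt (fun p : Fin 2 → ℝ => p 0)
      (ContinuousLinearMap.proj 0 : (Fin 2 → ℝ) →L[ℝ] ℝ) v :=
    (ContinuousLinearMap.proj 0 : (Fin 2 → ℝ) →L[ℝ] ℝ).hasFDerivAt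
  have h1 : HasFDerivAt (fun p : Fin 2 → ℝ => p 1)
      (ContinuousLinearMap.proj 1 : (Fin 2 → ℝ) →L[ℝ] ℝ) v :=
    (ContinuousLinearMap.proj 1 : (Fin 2 → ℝ) →L[ℝ] ℝ).hasFDerivAt
  have hN : HasFDerivAt (fun p : Fin 2 → ℝ => p 0 * w 0 + δ^2 * p 1 * w 1)
      ((w 0) • (ContinuousLinearMap.proj 0 : (Fin 2 → ℝ) →L[ℝ] ℝ)
        + (δ^2 * w 1) • (ContinuousLinearMap.proj 1 : (Fin 2 → ℝ) →L[ℝ] ℝ)) v := by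
    have := (h0.mul_const (w 0)).add ((h1.const_mul (δ^2)).mul_const (w 1))
    refine this.congr_fderiv ?_
    ext u
    simp [ContinuousLinearMap.proj]
    ring
  have hD := sqrt_qf_hasFDerivAt δ v hv
  have hInv : HasDerivAt (fun y : ℝ => y⁻¹) (-(Real.sqrt (qf δ v) ^ 2)⁻¹) (Real.sqrt (qf δ v)) :=
    hasDerivAt_inv (ne_of_gt hspos)
  have hI := hInv.comp_hasFDerivAt v hD
  have hg := hN.mul hI
  simp only [Function.comp_def] at hg
  simp only [div_eq_mul_inv]
  have hg' : HasFDerivAt (fun p : Fin 2 → ℝ => (p 0 * w 0 + δ^2 * p 1 * w 1) * (Real.sqrt (qf δ p))⁻¹) _ v := hg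
  rw [hg'.fderiv]
  simp [ContinuousLinearMap.proj]
  have hsq : Real.sqrt (qf δ v) ^ 2 = qf δ v := Real.sq_sqrt hqnn
  field_simp
  rw [hsq]
  ring

set_option maxHeartbeats 1000000 in
/-- The shrinking ellipses x(ρ,t) = √(1−2t)(cos 2πρ, δ sin 2πρ) satisfy the
    anisotropic curve shortening law (1/γ₀(ν)) x_t · ν = κ γ₀''(ν)τ·τ for the
    elliptic anisotropy γ₀(p) = √(p₁² + δ²p₂²). -/
theorem shrinking_ellipse_solves_anisotropic_csf
    (δ : ℝ) (hδ0 : 0 < δ) (hδ1 : δ ≤ 1) (ρ t : ℝ) (ht0 : 0 ≤ t) (ht : t < 1 / 2)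
    (γ₀ : (Fin 2 → ℝ) → ℝ)
    (hγ₀ : γ₀ = fun p => Real.sqrt ((p 0) ^ 2 + δ ^ 2 * (p 1) ^ 2))
    (x : ℝ → ℝ → Fin 2 → ℝ)
    (hx : x = fun r s => ![Real.sqrt (1 - 2 * s) * Real.cos (2 * π * r),
                           Real.sqrt (1 - 2 * s) * δ * Real.sin (2 * π * r)])
    (xt xρ xρρ : Fin 2 → ℝ)
    (hxt : xt = deriv (fun s => x ρ s) t)
    (hxρ : xρ = deriv (fun r => x r t) ρ)
    (hxρρ : xρρ = deriv (deriv (fun r => x r t)) ρ)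
    (τ ν : Fin 2 → ℝ) (κ : ℝ)
    (hτ : τ = (Real.sqrt (xρ ⬝ᵥ xρ))⁻¹ • xρ)
    (hν : ν = perp τ)
    (hκ : κ = (xρρ ⬝ᵥ ν) / (xρ ⬝ᵥ xρ)) :
    (γ₀ ν)⁻¹ * (xt ⬝ᵥ ν) = κ * fderiv ℝ (fderiv ℝ γ₀) ν τ τ := by
  have h1t : (0:ℝ) < 1 - 2 * t := by linarith
  set a : ℝ := Real.sqrt (1 - 2 * t) with ha
  have hapos : 0 < a := Real.sqrt_pos.2 h1t
  have ha2 : a ^ 2 = 1 - 2 * t := Real.sq_sqrt (le_of_lt h1t)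
  set c : ℝ := Real.cos (2 * π * ρ) with hc
  set sn : ℝ := Real.sin (2 * π * ρ) with hsn
  have pyth : sn ^ 2 + c ^ 2 = 1 := Real.sin_sq_add_cos_sq _
  have hδ2 : (0:ℝ) < δ ^ 2 := by positivity
  have hδ21 : δ ^ 2 ≤ 1 := by nlinarith
  have hQpos : 0 < sn ^ 2 + δ ^ 2 * c ^ 2 := by
    nlinarith [mul_nonneg (sq_nonneg sn) (sub_nonneg.2 hδ21), pyth, hδ2]
  set w : ℝ := Real.sqrt (sn ^ 2 + δ ^ 2 * c ^ 2) with hwdef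
  have hwpos : 0 < w := Real.sqrt_pos.2 hQpos
  have hw2 : w ^ 2 = sn ^ 2 + δ ^ 2 * c ^ 2 := Real.sq_sqrt (le_of_lt hQpos)
  have hπ : (0:ℝ) < π := Real.pi_pos
  -- time derivative
  have hsqrt_deriv : HasDerivAt (fun s : ℝ => Real.sqrt (1 - 2 * s)) (-a⁻¹) t := by
    have hlin : HasDerivAt (fun s : ℝ => 1 - 2 * s) (-2) t := by
      simpa using ((hasDerivAt_id t).const_mul (2:ℝ)).const_sub 1
    have := (Real.hasDerivAt_sqrt (ne_of_gt h1t)).comp t hlin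
    refine this.congr_deriv ?_
    rw [← ha]
    field_simp
  have hxt_eq : xt = ![-a⁻¹ * c, -a⁻¹ * δ * sn] := by
    rw [hxt, hx]
    have : HasDerivAt (fun s => (![Real.sqrt (1 - 2 * s) * c,
        Real.sqrt (1 - 2 * s) * δ * sn] : Fin 2 → ℝ)) ![-a⁻¹ * c, -a⁻¹ * δ * sn] t := by
      rw [hasDerivAt_pi]
      intro i
      fin_cases i
      · simpa using hsqrt_deriv.mul_const c
      · simpa using (hsqrt_deriv.mul_const δ).mul_const sn
    exact this.deriv
  -- space derivative
  have hlin : ∀ r : ℝ, HasDerivAt (fun r : ℝ => 2 * π * r) (2 * π) r := fun r => by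
    simpa using (hasDerivAt_id r).const_mul (2 * π)
  have hd1 : ∀ r : ℝ, HasDerivAt (fun r => x r t)
      (![-(2 * π * a) * Real.sin (2 * π * r), 2 * π * a * δ * Real.cos (2 * π * r)]) r := by
    intro r
    rw [hx]
    rw [hasDerivAt_pi]
    intro i
    fin_cases i <;> simp
    · have h := ((Real.hasDerivAt_cos (2 * π * r)).comp r (hlin r)).const_mul a
      refine h.congr_deriv ?_ <;> (try simp only [Function.comp_def]) <;> ring
    · have h := ((Real.hasDerivAt_sin (2 * π * r)).comp r (hlin r)).const_mul (a * δ)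
      refine h.congr_deriv ?_ <;> (try simp only [Function.comp_def]) <;> ring
  have hxρ_eq : xρ = ![-(2 * π * a) * sn, 2 * π * a * δ * c] := by
    rw [hxρ]; exact (hd1 ρ).deriv
  have hderiv1 : deriv (fun r => x r t)
      = fun r => (![-(2 * π * a) * Real.sin (2 * π * r), 2 * π * a * δ * Real.cos (2 * π * r)] : Fin 2 → ℝ) :=
    funext fun r => (hd1 r).deriv
  have hxρρ_eq : xρρ = ![-(2 * π) ^ 2 * a * c, -(2 * π) ^ 2 * a * δ * sn] := by
    rw [hxρρ, hderiv1]
    have : HasDerivAt (fun r => (![-(2 * π * a) * Real.sin (2 * π * r),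
        2 * π * a * δ * Real.cos (2 * π * r)] : Fin 2 → ℝ))
        ![-(2 * π) ^ 2 * a * c, -(2 * π) ^ 2 * a * δ * sn] ρ := by
      rw [hasDerivAt_pi]
      intro i
      fin_cases i <;> simp
      · have h := ((Real.hasDerivAt_sin (2 * π * ρ)).comp ρ (hlin ρ)).const_mul (-(2 * π * a))
        refine (h.congr_deriv ?_).congr_of_eventuallyEq (Filter.Eventually.of_forall fun u => ?_) <;> (try simp only [Function.comp_def]) <;>
          (try simp only [← hsn, ← hc]) <;> ring
      · have h := ((Real.hasDerivAt_cos (2 * π * ρ)).comp ρ (hlin ρ)).const_mul (2 * π * a * δ)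
        refine h.congr_deriv ?_ <;> (try funext u) <;> (try simp only [Function.comp_def]) <;>
          (try simp only [← hsn, ← hc]) <;> ring
    exact this.deriv
  -- norm of xρ
  have hdot : xρ ⬝ᵥ xρ = (2 * π * a * w) ^ 2 := by
    rw [hxρ_eq]
    simp [dotProduct, Fin.sum_univ_two]
    nlinarith [hw2]
  have hnorm : Real.sqrt (xρ ⬝ᵥ xρ) = 2 * π * a * w := by
    rw [hdot, Real.sqrt_sq (by positivity)]
  -- τ and ν components
  have hτ0 : τ 0 = -sn / w := by
    rw [hτ, hnorm, hxρ_eq]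
    simp
    field_simp
  have hτ1 : τ 1 = δ * c / w := by
    rw [hτ, hnorm, hxρ_eq]
    simp
    field_simp
  have hν0 : ν 0 = -(δ * c) / w := by
    rw [hν]; simp [perp, hτ1]; ring
  have hν1 : ν 1 = -sn / w := by
    rw [hν]; simp [perp, hτ0]
  -- qf of ν
  have hqfν : qf δ ν = (δ / w) ^ 2 := by
    unfold qf
    rw [hν0, hν1]
    field_simp
    linear_combination pyth
  have hqfν_ne : qf δ ν ≠ 0 := by
    rw [hqfν]; positivity
  have hsqrtqfν : Real.sqrt (qf δ ν) = δ / w := by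
    rw [hqfν, Real.sqrt_sq (by positivity)]
  -- γ₀ in terms of qf
  have hγ₀' : γ₀ = fun p => Real.sqrt (qf δ p) := by rw [hγ₀]; rfl
  have hγν : γ₀ ν = δ / w := by rw [hγ₀']; exact hsqrtqfν
  -- Hessian
  have hH := gamma_hess δ ν τ hqfν_ne
  -- dot products
  have hxtν : xt ⬝ᵥ ν = δ / (a * w) := by
    rw [hxt_eq]
    simp [dotProduct, Fin.sum_univ_two, hν0, hν1]
    field_simp
    linear_combination pyth
  have hxρρν : xρρ ⬝ᵥ ν = (2 * π) ^ 2 * a * δ / w := by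
    rw [hxρρ_eq]
    simp [dotProduct, Fin.sum_univ_two, hν0, hν1]
    field_simp
    linear_combination pyth
  have hwne : w ≠ 0 := ne_of_gt hwpos
  have hane : a ≠ 0 := ne_of_gt hapos
  have hδne : δ ≠ 0 := ne_of_gt hδ0
  have hπne : π ≠ 0 := ne_of_gt hπ
  have hLHS : (γ₀ ν)⁻¹ * (xt ⬝ᵥ ν) = 1 / a := by
    rw [hγν, hxtν]
    field_simp
  have hRHS : κ * fderiv ℝ (fderiv ℝ γ₀) ν τ τ = 1 / a := by
    rw [hγ₀', hH, hκ, hxρρν, hdot, hτ0, hτ1, hν0, hν1, hsqrtqfν, hqfν]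
    field_simp
    linear_combination (-(sn^2+δ^4*c^2)) * pyth
      + (-(w^2+sn^2+δ^2*c^2)) * hw2
  rw [hLHS, hRHS]
end
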